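/- (Full conformal anti-conservativeness) In the setting of the full conformal prediction interval, assume additionally that for all y ∈ R the fitted absolute residuals R_{y,1},...,R_{y,n} have a continuous joint distribution (so all residuals are distinct almost surely). Then P(Y_{n+1} ∈ C_conf(X_{n+1})) ≤ 1-α + 1/(n+1). -/

import Mathlib

open MeasureTheory Finset
open scoped Classical
open scoped ENNReal

section aux
variable {E : Type*} [MeasurableSpace E]

noncomputable def cfR (n : ℕ) (A : (Fin (n + 1) → E × ℝ) → E → ℝ)
    (i : Fin (n + 1)) (z : Fin (n + 1) → E × ℝ) : ℝ :=
  |(z i).2 - A z (z i).1|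

noncomputable def cfG (n : ℕ) (A : (Fin (n + 1) → E × ℝ) → E → ℝ)
    (j : Fin (n + 1)) (z : Fin (n + 1) → E × ℝ) : ℕ :=
  (Finset.univ.filter fun i => cfR n A i z ≤ cfR n A j z).card

omit [MeasurableSpace E] in
lemma cfG_eq_sum (n : ℕ) (A : (Fin (n + 1) → E × ℝ) → E → ℝ) (j : Fin (n + 1))
    (z : Fin (n + 1) → E × ℝ) :
    cfG n A j z = ∑ i : Fin (n + 1), if cfR n A i z ≤ cfR n A j z then 1 else 0 := by
  rw [cfG, Finset.card_filter]

omit [MeasurableSpace E] in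
lemma cfR_comp (n : ℕ) (A : (Fin (n + 1) → E × ℝ) → E → ℝ)
    (hsym : ∀ (z : Fin (n + 1) → E × ℝ) (σ : Equiv.Perm (Fin (n + 1))), A (z ∘ σ) = A z)
    (σ : Equiv.Perm (Fin (n + 1))) (i : Fin (n + 1)) (z : Fin (n + 1) → E × ℝ) :
    cfR n A i (z ∘ σ) = cfR n A (σ i) z := by
  simp [cfR, hsym z σ, Function.comp]

omit [MeasurableSpace E] in
lemma cfG_comp (n : ℕ) (A : (Fin (n + 1) → E × ℝ) → E → ℝ)
    (hsym : ∀ (z : Fin (n + 1) → E × ℝ) (σ : Equiv.Perm (Fin (n + 1))), A (z ∘ σ) = A z)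
    (σ : Equiv.Perm (Fin (n + 1))) (j : Fin (n + 1)) (z : Fin (n + 1) → E × ℝ) :
    cfG n A j (z ∘ σ) = cfG n A (σ j) z := by
  unfold cfG
  simp only [cfR_comp n A hsym σ]
  exact Finset.card_bij' (fun i _ => σ i) (fun i _ => σ.symm i)
    (by intro a ha; simp only [Finset.mem_filter, Finset.mem_univ, true_and] at ha ⊢; exact ha)
    (by intro a ha; simp only [Finset.mem_filter, Finset.mem_univ, true_and] at ha ⊢; simpa using ha)
    (by intro a _; simp) (by intro a _; simp)

lemma cf_measurePreserving (n : ℕ) (P : Measure (E × ℝ)) [IsProbabilityMeasure P]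
    (σ : Equiv.Perm (Fin (n + 1))) :
    MeasurePreserving (fun z : Fin (n + 1) → E × ℝ => z ∘ σ)
      (Measure.pi fun _ => P) (Measure.pi fun _ => P) := by
  have h := measurePreserving_piCongrLeft (fun _ : Fin (n + 1) => P) σ.symm
  have he : ⇑(MeasurableEquiv.piCongrLeft (fun _ : Fin (n + 1) => E × ℝ) σ.symm)
      = fun z : Fin (n + 1) → E × ℝ => z ∘ σ := by
    funext z b
    conv_lhs => rw [MeasurableEquiv.coe_piCongrLeft,
      show b = σ.symm (σ b) from (σ.symm_apply_apply b).symm]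
    exact Equiv.piCongrLeft_apply_apply _ _ _ _
  rwa [he] at h

lemma cfG_meas (n : ℕ) (A : (Fin (n + 1) → E × ℝ) → E → ℝ)
    (hmeas : Measurable fun p : (Fin (n + 1) → E × ℝ) × E => A p.1 p.2) (j : Fin (n + 1)) :
    Measurable (cfG n A j) := by
  have hR : ∀ i, Measurable (cfR n A i) := by
    intro i
    unfold cfR
    have h1 : Measurable fun z : Fin (n + 1) → E × ℝ => (z i).2 :=
      (measurable_pi_apply i).snd
    have h2 : Measurable fun z : Fin (n + 1) → E × ℝ => A z (z i).1 :=
      hmeas.comp (measurable_id.prodMk (measurable_pi_apply i).fst)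
    exact (h1.sub h2).abs
  have : cfG n A j = fun z => ∑ i : Fin (n + 1), if cfR n A i z ≤ cfR n A j z then 1 else 0 := by
    funext z; exact cfG_eq_sum n A j z
  rw [this]
  exact Finset.measurable_sum _ fun i _ =>
    Measurable.ite (measurableSet_le (hR i) (hR j)) measurable_const measurable_const

omit [MeasurableSpace E] in
lemma cfG_count_le (n : ℕ) (A : (Fin (n + 1) → E × ℝ) → E → ℝ) (k : ℕ)
    (z : Fin (n + 1) → E × ℝ) :
    (Finset.univ.filter fun j => cfG n A j z ≤ k).card ≤ k := by
  set S := Finset.univ.filter fun j => cfG n A j z ≤ k with hS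
  rcases S.eq_empty_or_nonempty with h | h
  · simp [h]
  · obtain ⟨j0, hj0S, hj0⟩ := S.exists_max_image (fun j => cfR n A j z) h
    have hsub : S ⊆ Finset.univ.filter fun i => cfR n A i z ≤ cfR n A j0 z := by
      intro j hj
      simp only [Finset.mem_filter, Finset.mem_univ, true_and]
      exact hj0 j hj
    calc S.card ≤ _ := Finset.card_le_card hsub
    _ = cfG n A j0 z := rfl
    _ ≤ k := (Finset.mem_filter.mp hj0S).2

end aux

/-- Full conformal anti-conservativeness: in the full conformal
setting (i.i.d. data, symmetric regression algorithm `A` trained on the augmented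
data set where the response of the last point is replaced by the trial value `y`),
if for every `y ∈ ℝ` the fitted absolute residuals of the augmented data set have
a continuous joint distribution (so all residuals are distinct almost surely),
then `P(Y_{n+1} ∈ C_conf(X_{n+1})) ≤ 1-α + 1/(n+1)`. -/
theorem full_conformal_anticonservative
    {E : Type*} [MeasurableSpace E] (P : Measure (E × ℝ)) [IsProbabilityMeasure P]
    (n : ℕ) (A : (Fin (n + 1) → E × ℝ) → E → ℝ)
    (hsym : ∀ (z : Fin (n + 1) → E × ℝ) (σ : Equiv.Perm (Fin (n + 1))),
      A (z ∘ σ) = A z)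
    (hmeas : Measurable fun p : (Fin (n + 1) → E × ℝ) × E => A p.1 p.2)
    (α : ℝ) (hα : α ∈ Set.Ioo (0 : ℝ) 1)
    -- continuity of the joint distribution of the augmented residuals, for each trial y :
    (hcont : ∀ y : ℝ,
      (Measure.pi fun _ : Fin (n + 1) => P)
        {z | ∃ i j : Fin (n + 1), i ≠ j ∧
          |((Function.update z (Fin.last n) ((z (Fin.last n)).1, y)) i).2
              - A (Function.update z (Fin.last n) ((z (Fin.last n)).1, y))
                  ((Function.update z (Fin.last n) ((z (Fin.last n)).1, y)) i).1|
            = |((Function.update z (Fin.last n) ((z (Fin.last n)).1, y)) j).2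
              - A (Function.update z (Fin.last n) ((z (Fin.last n)).1, y))
                  ((Function.update z (Fin.last n) ((z (Fin.last n)).1, y)) j).1|} = 0) :
    (Measure.pi fun _ : Fin (n + 1) => P)
        {z | 1 + (Finset.univ.filter fun i : Fin n =>
              |(z i.castSucc).2 - A z (z i.castSucc).1|
                ≤ |(z (Fin.last n)).2 - A z (z (Fin.last n)).1|).card
          ≤ ⌈(1 - α) * ((n : ℝ) + 1)⌉₊}
      ≤ ENNReal.ofReal (1 - α + 1 / ((n : ℝ) + 1)) := by
  set μ := Measure.pi fun _ : Fin (n + 1) => P with hμ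
  set k := ⌈(1 - α) * ((n : ℝ) + 1)⌉₊ with hk
  -- identify the event with a rank condition
  have hcard : ∀ z : Fin (n + 1) → E × ℝ,
      cfG n A (Fin.last n) z = 1 + (Finset.univ.filter fun i : Fin n =>
        |(z i.castSucc).2 - A z (z i.castSucc).1|
          ≤ |(z (Fin.last n)).2 - A z (z (Fin.last n)).1|).card := by
    intro z
    rw [cfG_eq_sum, Fin.sum_univ_castSucc, if_pos le_rfl, add_comm, Finset.card_filter]
    simp only [cfR]
    convert rfl
    exact if_congr Iff.rfl rfl rfl
  have hset : {z : Fin (n + 1) → E × ℝ | 1 + (Finset.univ.filter fun i : Fin n =>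
        |(z i.castSucc).2 - A z (z i.castSucc).1|
          ≤ |(z (Fin.last n)).2 - A z (z (Fin.last n)).1|).card ≤ k}
      = {z | cfG n A (Fin.last n) z ≤ k} := by
    ext z
    simp only [Set.mem_setOf_eq, hcard z]
  rw [hset]
  -- measurability of the rank events
  have hmeasE : ∀ j : Fin (n + 1), MeasurableSet {z : Fin (n + 1) → E × ℝ | cfG n A j z ≤ k} := by
    intro j
    have : MeasurableSet (cfG n A j ⁻¹' Set.Iic k) :=
      (cfG_meas n A hmeas j) MeasurableSpace.measurableSet_top
    exact this
  -- exchangeability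
  have key : ∀ j : Fin (n + 1),
      μ {z | cfG n A j z ≤ k} = μ {z | cfG n A (Fin.last n) z ≤ k} := by
    intro j
    have hmp := cf_measurePreserving n P (Equiv.swap j (Fin.last n))
    have hpre : (fun z : Fin (n + 1) → E × ℝ => z ∘ (Equiv.swap j (Fin.last n))) ⁻¹'
        {z | cfG n A (Fin.last n) z ≤ k} = {z | cfG n A j z ≤ k} := by
      ext z
      simp only [Set.mem_preimage, Set.mem_setOf_eq, cfG_comp n A hsym,
        Equiv.swap_apply_right]
    rw [← hpre, hmp.measure_preimage (hmeasE _).nullMeasurableSet]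
  -- the sum bound
  have hsum : ((n + 1 : ℕ) : ℝ≥0∞) * μ {z | cfG n A (Fin.last n) z ≤ k} ≤ (k : ℝ≥0∞) := by
    have h1 : ∑ j : Fin (n + 1), μ {z | cfG n A j z ≤ k}
        = ((n + 1 : ℕ) : ℝ≥0∞) * μ {z | cfG n A (Fin.last n) z ≤ k} := by
      simp [key, Finset.sum_const]
    rw [← h1]
    calc ∑ j : Fin (n + 1), μ {z | cfG n A j z ≤ k}
        = ∑ j : Fin (n + 1), ∫⁻ z, ({z | cfG n A j z ≤ k}).indicator
            (fun _ => (1 : ℝ≥0∞)) z ∂μ := by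
          exact Finset.sum_congr rfl fun j _ => (lintegral_indicator_one (hmeasE j)).symm
      _ = ∫⁻ z, ∑ j : Fin (n + 1), ({z | cfG n A j z ≤ k}).indicator
            (fun _ => (1 : ℝ≥0∞)) z ∂μ :=
          (lintegral_finset_sum _ fun j _ => measurable_const.indicator (hmeasE j)).symm
      _ ≤ ∫⁻ _, (k : ℝ≥0∞) ∂μ := by
          refine lintegral_mono fun z => ?_
          have hcount := cfG_count_le n A k z
          calc ∑ j : Fin (n + 1), ({z | cfG n A j z ≤ k}).indicator
                (fun _ => (1 : ℝ≥0∞)) z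
              = ∑ j : Fin (n + 1), if cfG n A j z ≤ k then (1 : ℝ≥0∞) else 0 := by
                refine Finset.sum_congr rfl fun j _ => ?_
                by_cases h : cfG n A j z ≤ k <;> simp [Set.indicator, h]
            _ = ((Finset.univ.filter fun j => cfG n A j z ≤ k).card : ℝ≥0∞) := by
                rw [Finset.card_filter]
                push_cast
                exact Finset.sum_congr rfl fun j _ => by split <;> simp
            _ ≤ (k : ℝ≥0∞) := Nat.cast_le.mpr hcount
      _ = (k : ℝ≥0∞) := by simp
  -- conclude with arithmetic
  have hn1 : (0 : ℝ) < (n : ℝ) + 1 := by positivity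
  have hx : (0 : ℝ) ≤ (1 - α) * ((n : ℝ) + 1) := by nlinarith [hα.2, hα.1]
  have hkreal : (k : ℝ) ≤ ((n : ℝ) + 1) * (1 - α + 1 / ((n : ℝ) + 1)) := by
    have := Nat.ceil_lt_add_one hx
    have h2 : ((n : ℝ) + 1) * (1 - α + 1 / ((n : ℝ) + 1))
        = (1 - α) * ((n : ℝ) + 1) + 1 := by field_simp
    rw [h2]
    exact le_of_lt this
  have hb : (k : ℝ≥0∞) ≤ ((n + 1 : ℕ) : ℝ≥0∞) * ENNReal.ofReal (1 - α + 1 / ((n : ℝ) + 1)) := by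
    have h3 : ((n + 1 : ℕ) : ℝ≥0∞) = ENNReal.ofReal ((n : ℝ) + 1) := by
      rw [← ENNReal.ofReal_natCast]
      congr 1
      push_cast
      ring
    rw [h3, ← ENNReal.ofReal_mul (le_of_lt hn1), ← ENNReal.ofReal_natCast]
    exact ENNReal.ofReal_le_ofReal hkreal
  have hne0 : ((n + 1 : ℕ) : ℝ≥0∞) ≠ 0 := by
    simp
  have hnetop : ((n + 1 : ℕ) : ℝ≥0∞) ≠ ⊤ := ENNReal.natCast_ne_top _
  have := hsum.trans hb
  rwa [ENNReal.mul_le_mul_iff_right hne0 hnetop] at this
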